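/- Let N be a positive natural number and V = Fin N → ℝ with weighted inner product ⟨f,g⟩ = w·Σ_i f i·g i (w > 0), pointwise product *, and constant-one function 𝟙. Let Δh : V →ₗ[ℝ] V be symmetric and G = Δh∘Δh + 2a·Δh + α·id for reals a, α. Let Δt, ζⁿ, ζⁿ⁺¹ ∈ ℝ, η ≥ 0, and M̄, q̄, φⁿ, φⁿ⁺¹, qⁿ, qⁿ⁺¹ ∈ V satisfy: μ̃ = G((φⁿ+φⁿ⁺¹)/2) + (1/2)·((qⁿ+qⁿ⁺¹)/2)*q̄ + √η·((ζⁿ+ζⁿ⁺¹)/2)·𝟙, φⁿ⁺¹ - φⁿ = -Δt·(M̄*μ̃), ζⁿ⁺¹ - ζⁿ = √η·⟨φⁿ⁺¹ - φⁿ, 𝟙⟩, and qⁿ⁺¹ - qⁿ = q̄*(φⁿ⁺¹ - φⁿ). Then the discrete energy Fᵏ = (1/2)⟨φᵏ,Gφᵏ⟩ + (1/4)⟨qᵏ,qᵏ⟩ + (1/2)(ζᵏ)² satisfies Fⁿ⁺¹ - Fⁿ = -Δt·⟨μ̃, M̄*μ̃⟩; in particular Fⁿ⁺¹ ≤ Fⁿ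 when Δt ≥ 0 and M̄ is pointwise nonnegative (energy dissipation law of the fully discrete EQ scheme for the Allen–Cahn model with a penalizing potential, Scheme 4.5). -/
import Mathlib


/-- Energy dissipation law of the fully discrete EQ scheme for the Allen–Cahn
model with a penalizing potential (Scheme 4.5). -/
theorem discrete_energy_dissipation_AC_penalizing_EQ
    (N : ℕ) (hN : 0 < N) (w : ℝ) (hw : 0 < w)
    (ip : (Fin N → ℝ) → (Fin N → ℝ) → ℝ)
    (hip : ∀ f g, ip f g = w * ∑ i, f i * g i)
    (one : Fin N → ℝ) (hone : one = fun _ => 1)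
    (Δh : (Fin N → ℝ) →ₗ[ℝ] (Fin N → ℝ))
    (hsym : ∀ f g, ip (Δh f) g = ip f (Δh g))
    (a α : ℝ) (G : (Fin N → ℝ) → (Fin N → ℝ))
    (hG : ∀ f, G f = Δh (Δh f) + (2 * a) • Δh f + α • f)
    (Δt ζn ζn1 η : ℝ) (hη : 0 ≤ η)
    (Mbar qbar phin phin1 qn qn1 mutilde : Fin N → ℝ)
    (hmut : mutilde = G ((1 / 2 : ℝ) • (phin + phin1)) +
      (1 / 2 : ℝ) • (((1 / 2 : ℝ) • (qn + qn1)) * qbar) +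
      (Real.sqrt η * ((ζn + ζn1) / 2)) • one)
    (hphi : phin1 - phin = (-Δt) • (Mbar * mutilde))
    (hζ : ζn1 - ζn = Real.sqrt η * ip (phin1 - phin) one)
    (hq : qn1 - qn = qbar * (phin1 - phin))
    (Fn Fn1 : ℝ)
    (hFn : Fn = (1 / 2) * ip phin (G phin) + (1 / 4) * ip qn qn +
      (1 / 2) * ζn ^ 2)
    (hFn1 : Fn1 = (1 / 2) * ip phin1 (G phin1) + (1 / 4) * ip qn1 qn1 +
      (1 / 2) * ζn1 ^ 2) :
    Fn1 - Fn = -Δt * ip mutilde (Mbar * mutilde) ∧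
    (0 ≤ Δt → (∀ i, 0 ≤ Mbar i) → Fn1 ≤ Fn) := by
  -- basic bilinearity / symmetry facts for ip
  have ipc : ∀ f g, ip f g = ip g f := by
    intro f g
    simp only [hip]
    congr 1
    exact Finset.sum_congr rfl fun i _ => mul_comm _ _
  have ipal : ∀ f g h0, ip (f + g) h0 = ip f h0 + ip g h0 := by
    intro f g h0
    simp only [hip, Pi.add_apply, add_mul, Finset.sum_add_distrib, mul_add]
  have ipml : ∀ (c : ℝ) (f g : Fin N → ℝ), ip (c • f) g = c * ip f g := by
    intro c f g
    simp only [hip, Pi.smul_apply, smul_eq_mul, mul_assoc, ← Finset.mul_sum]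
    ring
  have ipar : ∀ f g h0, ip f (g + h0) = ip f g + ip f h0 := by
    intro f g h0
    rw [ipc, ipal, ipc g, ipc h0]
  have ipmr : ∀ (c : ℝ) (f g : Fin N → ℝ), ip f (c • g) = c * ip f g := by
    intro c f g
    rw [ipc, ipml, ipc]
  have ipprod : ∀ u v x : Fin N → ℝ, ip (u * v) x = ip v (u * x) := by
    intro u v x
    simp only [hip, Pi.mul_apply]
    congr 1
    exact Finset.sum_congr rfl fun i _ => by ring
  -- symmetry of G
  have hGsym : ∀ f g, ip f (G g) = ip (G f) g := by
    intro f g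
    simp only [hG]
    rw [ipar, ipar, ipal, ipal, ipmr, ipmr, ipml, ipml,
      ← hsym f (Δh g), hsym (Δh f) g, hsym f g, ipc f g]
  have split : ∀ x y u v : Fin N → ℝ,
      ip (x - y) (u + v) = ip x u + ip x v - ip y u - ip y v := by
    intro x y u v
    have h1 : x - y + y = x := by abel
    have h2 := ipal (x - y) y (u + v)
    rw [h1] at h2
    simp only [ipar] at h2 ⊢
    linarith
  set δ : Fin N → ℝ := phin1 - phin with hδ
  -- quadratic difference for G
  have Ghalf : G ((1 / 2 : ℝ) • (phin + phin1))
      = (1 / 2 : ℝ) • (G phin + G phin1) := by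
    simp only [hG, map_smul, map_add, smul_add]
    module
  have E1 : ip phin1 (G phin1) - ip phin (G phin)
      = 2 * ip δ (G ((1 / 2 : ℝ) • (phin + phin1))) := by
    have cross : ip phin1 (G phin) = ip phin (G phin1) := by
      rw [hGsym, ipc]
    have : ip δ (G ((1 / 2 : ℝ) • (phin + phin1)))
        = (1 / 2) * (ip phin1 (G phin) + ip phin1 (G phin1)
          - ip phin (G phin) - ip phin (G phin1)) := by
      rw [Ghalf, ipmr, hδ, split]
    rw [this, cross]
    ring
  -- quadratic difference for q
  have E2 : ip qn1 qn1 - ip qn qn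
      = 4 * ip δ ((1 / 2 : ℝ) • (((1 / 2 : ℝ) • (qn + qn1)) * qbar)) := by
    have hset : (1 / 2 : ℝ) • (((1 / 2 : ℝ) • (qn + qn1)) * qbar)
        = (1 / 4 : ℝ) • (qbar * (qn1 + qn)) := by
      funext i
      simp only [Pi.smul_apply, Pi.mul_apply, Pi.add_apply, smul_eq_mul]
      ring
    have hdiff : ip qn1 qn1 - ip qn qn = ip (qn1 - qn) (qn1 + qn) := by
      rw [split]
      have hcom : ip qn1 qn = ip qn qn1 := ipc _ _
      linarith
    rw [hset, ipmr, hdiff, hq, ipprod]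
    ring
  -- ζ part
  have E3 : ζn1 ^ 2 - ζn ^ 2
      = 2 * ip δ ((Real.sqrt η * ((ζn + ζn1) / 2)) • one) := by
    rw [ipmr]
    have : ζn1 ^ 2 - ζn ^ 2 = (ζn + ζn1) * (ζn1 - ζn) := by ring
    rw [this, hζ]
    ring
  -- combine
  have Emut : ip δ mutilde
      = ip δ (G ((1 / 2 : ℝ) • (phin + phin1)))
        + ip δ ((1 / 2 : ℝ) • (((1 / 2 : ℝ) • (qn + qn1)) * qbar))
        + ip δ ((Real.sqrt η * ((ζn + ζn1) / 2)) • one) := by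
    rw [hmut, ipar, ipar]
  have key : Fn1 - Fn = ip δ mutilde := by
    rw [hFn, hFn1, Emut]
    linarith
  have hmain : Fn1 - Fn = -Δt * ip mutilde (Mbar * mutilde) := by
    rw [key, hphi, ipml, ipc]
  refine ⟨hmain, fun hΔt hM => ?_⟩
  have hnn : 0 ≤ ip mutilde (Mbar * mutilde) := by
    rw [hip]
    apply mul_nonneg hw.le
    apply Finset.sum_nonneg
    intro i _
    simp only [Pi.mul_apply]
    nlinarith [hM i, sq_nonneg (mutilde i)]
  nlinarith
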